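/- (Theorem 2, Horn–Jackson) Let (G_k,y) be a mass-action system and x* ∈ ℝ^n_{>0} a positive complex-balanced equilibrium. Then for every x ∈ ℝ^n_{>0} that is not a complex-balanced equilibrium (i.e. A_k x^Y ≠ 0), the strict inequality (ln(x/x*)) · f_k(x) < 0 holds, where ln(x/x*) ∈ ℝ^n denotes the vector with entries ln(x_j/x*_j) and · the Euclidean scalar product. -/

import Mathlib

open Matrix BigOperators Finset

variable {V : Type*}

/-- Directed reachability in the digraph with edge set `F`. -/
def dReach (F : Finset (V × V)) : V → V → Prop :=
  Relation.ReflTransGen fun a b => (a, b) ∈ F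

/-- Reachability in the underlying undirected graph of the digraph with edge set `F`. -/
def uReach (F : Finset (V × V)) : V → V → Prop :=
  Relation.ReflTransGen fun a b => (a, b) ∈ F ∨ (b, a) ∈ F

/-- A digraph is strongly connected if every vertex reaches every other vertex. -/
def StronglyConnected (F : Finset (V × V)) : Prop :=
  ∀ i j : V, dReach F i j

/-- A simple digraph has no self-loops. -/
def NoSelfLoops (F : Finset (V × V)) : Prop :=
  ∀ e ∈ F, e.1 ≠ e.2

/-- The edge set `F` contains a directed cycle. -/
def HasDirectedCycle (F : Finset (V × V)) : Prop :=
  ∃ v : V, Relation.TransGen (fun a b => (a, b) ∈ F) v v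

/-- The Laplacian matrix `A_k` of the labeled digraph `(V, F, k)`:
`(A_k)_{i,j} = k_{j→i}` if `(j→i) ∈ F`, `(A_k)_{i,i} = -∑_{(i→j)∈F} k_{i→j}`, and `0` otherwise. -/
noncomputable def laplacianMatrix [Fintype V] [DecidableEq V]
    (F : Finset (V × V)) (k : V × V → ℝ) : Matrix V V ℝ :=
  Matrix.of fun i j =>
    if i = j then -(∑ e ∈ F.filter (fun e => e.1 = i), k e)
    else if (j, i) ∈ F then k (j, i) else 0

/-- `T` is a directed spanning tree of the strongly connected digraph `E`, rooted at `i`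
and directed towards the root: no directed cycle, and every vertex except `i`
is the source of exactly one edge. -/
def IsSpanningTreeTo [DecidableEq V] (E : Finset (V × V)) (i : V)
    (T : Finset (V × V)) : Prop :=
  T ⊆ E ∧ ¬ HasDirectedCycle T ∧
    ∀ j : V, j ≠ i → (T.filter (fun e => e.1 = j)).card = 1

open scoped Classical in
/-- The tree constant `(K_k)_i = ∑_{T ∈ T_i} ∏_{(j→j')∈T} k_{j→j'}`. -/
noncomputable def treeConst [Fintype V] [DecidableEq V]
    (E : Finset (V × V)) (k : V × V → ℝ) (i : V) : ℝ :=
  ∑ T ∈ E.powerset.filter (fun T => IsSpanningTreeTo E i T), ∏ e ∈ T, k e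

/-- The incidence matrix of the digraph with edge set `F`: in the column of edge `(j→j')`,
entry `-1` in row `j`, entry `+1` in row `j'`, and `0` elsewhere. -/
noncomputable def incidence [DecidableEq V] (F : Finset (V × V)) :
    Matrix V {e : V × V // e ∈ F} ℝ :=
  Matrix.of fun i e =>
    (if (e : V × V).2 = i then (1 : ℝ) else 0) - (if (e : V × V).1 = i then (1 : ℝ) else 0)

/-- Every connected component of the digraph is strongly connected: whenever `j` is reachable
from `i` in the underlying undirected graph, it is reachable by a directed path. -/
def WeaklyReversible {V : Type*} (F : Finset (V × V)) : Prop :=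
  ∀ i j : V, uReach F i j → dReach F i j

/-- The underlying undirected simple graph of the digraph with edge set `F`. -/
def toSimpleGraph {V : Type*} (F : Finset (V × V)) : SimpleGraph V :=
  SimpleGraph.fromRel fun a b => (a, b) ∈ F

/-- `F` is an auxiliary digraph for the digraph `E`: its connected components are directed
trees on the vertex sets of the connected components of `E`. That is, `F` has no self-loops
and no pair of opposite edges, its underlying undirected graph is acyclic (a forest), and
its connected components coincide with those of `E`. -/
def IsAuxiliary {V : Type*} (E F : Finset (V × V)) : Prop :=
  NoSelfLoops F ∧ (∀ a b : V, (a, b) ∈ F → (b, a) ∉ F) ∧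
    (toSimpleGraph F).IsAcyclic ∧ (∀ i j : V, uReach F i j ↔ uReach E i j)

/-- `F` is a chain graph for `E`: an auxiliary digraph each of whose components is a chain
`i_1 → i_2 → … → i_m` on the corresponding component of `E`; equivalently, an auxiliary
digraph in which every vertex has out-degree at most one and in-degree at most one. -/
def IsChainGraphOn {V : Type*} [DecidableEq V] (E F : Finset (V × V)) : Prop :=
  IsAuxiliary E F ∧ (∀ v : V, (F.filter (fun e => e.1 = v)).card ≤ 1) ∧
    (∀ v : V, (F.filter (fun e => e.2 = v)).card ≤ 1)

/-- `F` is a star graph for `E`: an auxiliary digraph each of whose components is a star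
`i_1 → i_m, …, i_{m-1} → i_m` on the corresponding component of `E`; equivalently, an
auxiliary digraph in which all edges of one component share the same target (the root). -/
def IsStarGraphOn {V : Type*} (E F : Finset (V × V)) : Prop :=
  IsAuxiliary E F ∧ ∀ e ∈ F, ∀ e' ∈ F, uReach F e.2 e'.2 → e.2 = e'.2

/-- `T` is a directed spanning tree, rooted at `i` and directed towards the root, of the
connected component of `i` in the digraph `E`: no directed cycle, every vertex of the
component except `i` is the source of exactly one edge, and vertices outside the component
are sources of no edge. -/
def IsCompSpanningTreeTo {V : Type*} [DecidableEq V] (E : Finset (V × V)) (i : V)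
    (T : Finset (V × V)) : Prop :=
  T ⊆ E ∧ ¬ HasDirectedCycle T ∧
    (∀ j : V, j ≠ i → uReach E j i → (T.filter (fun e => e.1 = j)).card = 1) ∧
    (∀ j : V, ¬ uReach E j i → (T.filter (fun e => e.1 = j)).card = 0)

open scoped Classical in
/-- The tree constants, given componentwise: on each component `V^λ`,
`(K_k)_i = ∑_{T ∈ T_i} ∏_{(j→j')∈T} k_{j→j'}` with `T_i` the set of directed spanning trees
of the component rooted at `i`, directed towards the root. -/
noncomputable def treeConstM {V : Type*} [Fintype V] [DecidableEq V]
    (E : Finset (V × V)) (k : V × V → ℝ) (i : V) : ℝ :=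
  ∑ T ∈ E.powerset.filter (fun T => IsCompSpanningTreeTo E i T), ∏ e ∈ T, k e

/-- The (generalized) monomial `x^{y(i)} = ∏_j x_j^{(y(i))_j}` (real exponentiation). -/
noncomputable def monomial {V : Type*} [Fintype V] {n : ℕ}
    (y : V → Fin n → ℝ) (x : Fin n → ℝ) (i : V) : ℝ :=
  ∏ j : Fin n, x j ^ y i j

/-- The matrix `Y ∈ ℝ^{n × V}` whose columns are the complexes `y(i)`. -/
noncomputable def complexMatrix {V : Type*} {n : ℕ} (y : V → Fin n → ℝ) :
    Matrix (Fin n) V ℝ :=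
  Matrix.of fun j i => y i j

/-- The mass-action vector field `f_k(x) = Y A_k x^Y`. -/
noncomputable def massActionField {V : Type*} [Fintype V] [DecidableEq V] {n : ℕ}
    (E : Finset (V × V)) (k : V × V → ℝ) (y : V → Fin n → ℝ) (x : Fin n → ℝ) :
    Fin n → ℝ :=
  (complexMatrix y).mulVec ((laplacianMatrix E k).mulVec (monomial y x))

section HJhelpers

variable [Fintype V] [DecidableEq V]

lemma laplacian_mulVec_apply (E : Finset (V × V)) (hloop : NoSelfLoops E)
    (k : V × V → ℝ) (w : V → ℝ) (i : V) :
    (laplacianMatrix E k).mulVec w i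
      = (∑ e ∈ E.filter (fun e => e.2 = i), k e * w e.1)
        - (∑ e ∈ E.filter (fun e => e.1 = i), k e) * w i := by
  have hA : ∀ l, laplacianMatrix E k i l
      = (if (l, i) ∈ E then k (l, i) else 0)
        + (if i = l then -(∑ e ∈ E.filter (fun e => e.1 = i), k e) else 0) := by
    intro l
    by_cases h : i = l
    · subst h
      have hni : (i, i) ∉ E := fun hmem => (hloop _ hmem) rfl
      simp [laplacianMatrix, hni]
    · simp [laplacianMatrix, h]
  unfold Matrix.mulVec dotProduct
  simp only [hA, add_mul, Finset.sum_add_distrib]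
  have h1 : ∑ l, (if (l, i) ∈ E then k (l, i) else 0) * w l
      = ∑ e ∈ E.filter (fun e => e.2 = i), k e * w e.1 := by
    rw [show (∑ l, (if (l, i) ∈ E then k (l, i) else 0) * w l)
        = ∑ l ∈ Finset.univ.filter (fun l => (l, i) ∈ E), k (l, i) * w l by
      rw [Finset.sum_filter]
      exact Finset.sum_congr rfl fun l _ => by split <;> simp]
    refine Finset.sum_nbij' (fun l => (l, i)) (fun e => e.1) ?_ ?_ ?_ ?_ ?_
    · intro a ha
      rw [Finset.mem_filter] at ha ⊢
      exact ⟨ha.2, rfl⟩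
    · intro e he
      rw [Finset.mem_filter] at he ⊢
      refine ⟨Finset.mem_univ _, ?_⟩
      rw [← he.2]
      exact he.1
    · intro a _; rfl
    · intro e he
      rw [Finset.mem_filter] at he
      rw [← he.2]
    · intro a _; rfl
  have h2 : ∑ l, (if i = l then -(∑ e ∈ E.filter (fun e => e.1 = i), k e) else 0) * w l
      = -((∑ e ∈ E.filter (fun e => e.1 = i), k e) * w i) := by
    rw [Finset.sum_eq_single i]
    · simp
    · intro b _ hb; simp [Ne.symm hb]
    · intro h; exact absurd (Finset.mem_univ i) h
  rw [h1, h2]; ring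

lemma laplacian_pairing (E : Finset (V × V)) (hloop : NoSelfLoops E)
    (k : V × V → ℝ) (w g : V → ℝ) :
    ∑ i, g i * (laplacianMatrix E k).mulVec w i
      = ∑ e ∈ E, k e * w e.1 * (g e.2 - g e.1) := by
  simp only [laplacian_mulVec_apply E hloop k w, mul_sub, Finset.sum_sub_distrib,
    mul_sub, Finset.mul_sum]
  have hL : ∑ i, ∑ e ∈ E.filter (fun e => e.2 = i), g i * (k e * w e.1)
      = ∑ e ∈ E, k e * w e.1 * g e.2 := by
    rw [← Finset.sum_fiberwise E (fun e => e.2) (fun e => k e * w e.1 * g e.2)]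
    refine Finset.sum_congr rfl fun i _ => Finset.sum_congr rfl fun e he => ?_
    have he2 := (Finset.mem_filter.mp he).2
    rw [he2]; ring
  have hR : ∑ i, g i * ((∑ e ∈ E.filter (fun e => e.1 = i), k e) * w i)
      = ∑ e ∈ E, k e * w e.1 * g e.1 := by
    rw [← Finset.sum_fiberwise E (fun e => e.1) (fun e => k e * w e.1 * g e.1)]
    refine Finset.sum_congr rfl fun i _ => ?_
    rw [Finset.sum_mul, Finset.mul_sum]
    refine Finset.sum_congr rfl fun e he => ?_
    have he1 := (Finset.mem_filter.mp he).2
    rw [he1]; ring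
  rw [hL, hR]

lemma monomial_pos {n : ℕ} (y : V → Fin n → ℝ) (x : Fin n → ℝ)
    (hx : ∀ j, 0 < x j) (i : V) : 0 < monomial y x i :=
  Finset.prod_pos fun j _ => Real.rpow_pos_of_pos (hx j) _

lemma log_monomial {n : ℕ} (y : V → Fin n → ℝ) (x : Fin n → ℝ)
    (hx : ∀ j, 0 < x j) (i : V) :
    Real.log (monomial y x i) = ∑ j, y i j * Real.log (x j) := by
  rw [monomial, Real.log_prod]
  · exact Finset.sum_congr rfl fun j _ => Real.log_rpow (hx j) _
  · exact fun j _ => (Real.rpow_pos_of_pos (hx j) _).ne'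

end HJhelpers

/-- (Theorem 2, Horn–Jackson) Let `(G_k, y)` be a mass-action system and `x*` a positive
complex-balanced equilibrium. Then for every positive `x` that is not a complex-balanced
equilibrium, `(ln(x/x*)) ⬝ f_k(x) < 0`. -/
theorem horn_jackson_strict_lyapunov
    {V : Type*} [Fintype V] [DecidableEq V] {n : ℕ}
    (E : Finset (V × V)) (hloop : NoSelfLoops E)
    (k : V × V → ℝ) (hk : ∀ e ∈ E, 0 < k e)
    (y : V → Fin n → ℝ) (hyinj : Function.Injective y) (hynn : ∀ i j, 0 ≤ y i j)
    (xs : Fin n → ℝ) (hxs : ∀ j, 0 < xs j)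
    (hcb : (laplacianMatrix E k).mulVec (monomial y xs) = 0)
    (x : Fin n → ℝ) (hx : ∀ j, 0 < x j)
    (hncb : (laplacianMatrix E k).mulVec (monomial y x) ≠ 0) :
    ∑ j : Fin n, Real.log (x j / xs j) * massActionField E k y x j < 0 := by
  classical
  set c := monomial y xs with hc
  set v := monomial y x with hv
  have hcpos : ∀ i, 0 < c i := monomial_pos y xs hxs
  have hvpos : ∀ i, 0 < v i := monomial_pos y x hx
  set u : V → ℝ := fun i => v i / c i with hu
  have hupos : ∀ i, 0 < u i := fun i => div_pos (hvpos i) (hcpos i)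
  set g : V → ℝ := fun i => Real.log (v i) - Real.log (c i) with hg
  have hgu : ∀ a, g a = Real.log (u a) := fun a => by
    simp only [hg, hu]
    exact (Real.log_div (hvpos a).ne' (hcpos a).ne').symm
  have hvc : ∀ i, v i = c i * u i := fun i => by
    simp only [hu]
    rw [mul_comm, div_mul_cancel₀ _ (hcpos i).ne']
  -- Step 1: rewrite LHS as ∑ i, g i * (A v) i
  have hstep1 : ∑ j : Fin n, Real.log (x j / xs j) * massActionField E k y x j
      = ∑ i, g i * (laplacianMatrix E k).mulVec v i := by
    unfold massActionField
    rw [← hv]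
    set w := (laplacianMatrix E k).mulVec v with hw
    have hgi : ∀ i, g i = ∑ j, y i j * (Real.log (x j) - Real.log (xs j)) := by
      intro i
      simp only [hg, hv, hc, log_monomial y x hx i, log_monomial y xs hxs i,
        mul_sub, Finset.sum_sub_distrib]
    simp only [Matrix.mulVec, dotProduct, complexMatrix, Matrix.of_apply,
      Finset.mul_sum]
    rw [Finset.sum_comm]
    refine Finset.sum_congr rfl fun i _ => ?_
    rw [hgi i, Finset.sum_mul]
    refine Finset.sum_congr rfl fun j _ => ?_
    rw [Real.log_div (hx j).ne' (hxs j).ne']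
    ring
  -- complex balance makes the bound sum to zero
  have hzero : ∑ e ∈ E, k e * c e.1 * (u e.2 - u e.1) = 0 := by
    rw [← laplacian_pairing E hloop k c u, hcb]
    simp
  -- edge where the quotient differs
  have hedge : ∃ e ∈ E, u e.1 ≠ u e.2 := by
    by_contra hcon
    push_neg at hcon
    apply hncb
    funext i
    have hbal := congrFun hcb i
    rw [laplacian_mulVec_apply E hloop k c i] at hbal
    simp only [Pi.zero_apply] at hbal
    rw [laplacian_mulVec_apply E hloop k v i]
    simp only [Pi.zero_apply]
    have h1 : ∑ e ∈ E.filter (fun e => e.2 = i), k e * v e.1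
        = u i * ∑ e ∈ E.filter (fun e => e.2 = i), k e * c e.1 := by
      rw [Finset.mul_sum]
      refine Finset.sum_congr rfl fun e he => ?_
      obtain ⟨heE, he2⟩ := Finset.mem_filter.mp he
      have hue : u e.1 = u i := by rw [hcon e heE, he2]
      rw [hvc e.1, hue]; ring
    rw [h1, hvc i]
    linear_combination u i * hbal
  -- termwise inequalities
  have key : ∀ a b : V, u a * (Real.log (u b) - Real.log (u a)) ≤ u b - u a := by
    intro a b
    have h := Real.log_le_sub_one_of_pos (div_pos (hupos b) (hupos a))
    rw [Real.log_div (hupos b).ne' (hupos a).ne'] at h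
    have h' := mul_le_mul_of_nonneg_left h (hupos a).le
    calc u a * (Real.log (u b) - Real.log (u a)) ≤ u a * (u b / u a - 1) := h'
      _ = u b - u a := by rw [mul_sub, mul_one, mul_comm (u a), div_mul_cancel₀ _ (hupos a).ne']
  have keylt : ∀ a b : V, u a ≠ u b →
      u a * (Real.log (u b) - Real.log (u a)) < u b - u a := by
    intro a b hne
    have ht1 : u b / u a ≠ 1 := fun h =>
      hne ((div_eq_one_iff_eq (hupos a).ne').mp h).symm
    have h := Real.log_lt_sub_one_of_pos (div_pos (hupos b) (hupos a)) ht1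
    rw [Real.log_div (hupos b).ne' (hupos a).ne'] at h
    have h' := mul_lt_mul_of_pos_left h (hupos a)
    calc u a * (Real.log (u b) - Real.log (u a)) < u a * (u b / u a - 1) := h'
      _ = u b - u a := by rw [mul_sub, mul_one, mul_comm (u a), div_mul_cancel₀ _ (hupos a).ne']
  have hterm_le : ∀ e ∈ E, k e * v e.1 * (g e.2 - g e.1)
      ≤ k e * c e.1 * (u e.2 - u e.1) := by
    intro e he
    have hpos : 0 < k e * c e.1 := mul_pos (hk e he) (hcpos e.1)
    rw [hvc e.1, hgu e.2, hgu e.1]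
    calc k e * (c e.1 * u e.1) * (Real.log (u e.2) - Real.log (u e.1))
        = (k e * c e.1) * (u e.1 * (Real.log (u e.2) - Real.log (u e.1))) := by ring
      _ ≤ (k e * c e.1) * (u e.2 - u e.1) :=
          mul_le_mul_of_nonneg_left (key e.1 e.2) hpos.le
  have hlt : ∑ e ∈ E, k e * v e.1 * (g e.2 - g e.1)
      < ∑ e ∈ E, k e * c e.1 * (u e.2 - u e.1) := by
    obtain ⟨e0, he0E, he0⟩ := hedge
    refine Finset.sum_lt_sum hterm_le ⟨e0, he0E, ?_⟩
    have hpos : 0 < k e0 * c e0.1 := mul_pos (hk e0 he0E) (hcpos e0.1)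
    rw [hvc e0.1, hgu e0.2, hgu e0.1]
    calc k e0 * (c e0.1 * u e0.1) * (Real.log (u e0.2) - Real.log (u e0.1))
        = (k e0 * c e0.1) * (u e0.1 * (Real.log (u e0.2) - Real.log (u e0.1))) := by
          ring
      _ < (k e0 * c e0.1) * (u e0.2 - u e0.1) :=
          mul_lt_mul_of_pos_left (keylt e0.1 e0.2 he0) hpos
  rw [hstep1, laplacian_pairing E hloop k v g]
  exact hlt.trans_le hzero.le
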